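/- Let Ω ⊆ ℝⁿ be open and bounded, and suppose the Korn second inequality holds: ‖∇u‖_{L²} ≤ C(‖ε(u)‖_{L²} + ‖u‖_{L²}) for all u ∈ H¹(Ω)ⁿ. Let V be a closed subspace of H¹(Ω)ⁿ, with the embedding V ↪ L²(Ω)ⁿ compact, such that V contains no nonzero vector field with ε(u) = 0. Then there exists c > 0 such that ‖u‖_{H¹} ≤ c ‖ε(u)‖_{L²} for all u ∈ V. -/

import Mathlib

/-- Korn's first inequality on a constrained closed subspace (Theorem 2.3, abstract
Sobolev setting). `X` plays the role of `H¹(Ω)ⁿ`, `grad` of `∇`, `eps` of the strain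
tensor `ε`, and `J` of the embedding into `L²(Ω)ⁿ`. The `H¹` norm is controlled by
`‖∇u‖_{L²} + ‖u‖_{L²}`, Korn's second inequality
`‖∇u‖_{L²} ≤ C(‖ε(u)‖_{L²} + ‖u‖_{L²})` holds, `V` is a closed subspace on which the
`L²` embedding is compact and which contains no nonzero field with `ε(u) = 0`. Then
`‖u‖_{H¹} ≤ c ‖ε(u)‖_{L²}` on `V`. -/
theorem korn_first_inequality_constrained
    {X Y Z W : Type*}
    [NormedAddCommGroup X] [NormedSpace ℝ X] [CompleteSpace X]
    [NormedAddCommGroup Y] [NormedSpace ℝ Y]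
    [NormedAddCommGroup Z] [NormedSpace ℝ Z]
    [NormedAddCommGroup W] [NormedSpace ℝ W]
    (grad : X →L[ℝ] Y) (eps : X →L[ℝ] Z) (J : X →L[ℝ] W)
    (hnorm : ∀ u : X, ‖u‖ ≤ ‖grad u‖ + ‖J u‖)
    (C : ℝ) (hKorn : ∀ u : X, ‖grad u‖ ≤ C * (‖eps u‖ + ‖J u‖))
    (V : Submodule ℝ X) (hVclosed : IsClosed (V : Set X))
    (hcomp : IsCompactOperator (fun u : V => J u))
    (hker : ∀ u ∈ V, eps u = 0 → u = 0) :
    ∃ c : ℝ, 0 < c ∧ ∀ u ∈ V, ‖u‖ ≤ c * ‖eps u‖ := by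
  by_contra h
  push_neg at h
  -- extract a bad sequence
  choose u huV hu using fun n : ℕ => h ((n : ℝ) + 1) (by positivity)
  -- replace C by a positive constant
  set C' : ℝ := max C 0 + 1 with hC'
  have hC'pos : 0 < C' := by positivity
  have hKorn' : ∀ x : X, ‖grad x‖ ≤ C' * (‖eps x‖ + ‖J x‖) := by
    intro x
    refine (hKorn x).trans (mul_le_mul_of_nonneg_right ?_ (by positivity))
    simp only [hC']
    linarith [le_max_left C 0]
  have hune : ∀ n, u n ≠ 0 := by
    intro n hn
    have := hu n
    rw [hn] at this
    simp at this
  -- normalized sequence in V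
  set w : ℕ → V := fun n => ⟨‖u n‖⁻¹ • u n, V.smul_mem _ (huV n)⟩ with hw
  have hwnorm : ∀ n, ‖(w n : X)‖ = 1 := by
    intro n
    simp only [hw, norm_smul, norm_inv, norm_norm]
    exact inv_mul_cancel₀ (norm_ne_zero_iff.mpr (hune n))
  have heps : ∀ n, ‖eps (w n : X)‖ ≤ 1 / ((n : ℝ) + 1) := by
    intro n
    have hun : 0 < ‖u n‖ := norm_pos_iff.mpr (hune n)
    have h1 : ((n : ℝ) + 1) * ‖eps (u n)‖ < ‖u n‖ := hu n
    have h0 : ‖eps ((w n : X))‖ = ‖u n‖⁻¹ * ‖eps (u n)‖ := by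
      simp [hw, norm_smul]
    have h2 : ‖eps (u n)‖ ≤ ‖u n‖ / ((n : ℝ) + 1) := by
      rw [le_div_iff₀ (by positivity)]
      nlinarith
    calc ‖eps ((w n : X))‖ = ‖u n‖⁻¹ * ‖eps (u n)‖ := h0
      _ ≤ ‖u n‖⁻¹ * (‖u n‖ / ((n : ℝ) + 1)) := by gcongr
      _ = 1 / ((n : ℝ) + 1) := by field_simp
  have hepslim : Filter.Tendsto (fun n => ‖eps (w n : X)‖) Filter.atTop (nhds 0) := by
    refine squeeze_zero (fun n => norm_nonneg _) heps ?_
    exact tendsto_one_div_add_atTop_nhds_zero_nat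
  -- compactness: extract convergent subsequence of J ∘ w
  have hbdd : Bornology.IsBounded (Set.range w) := by
    refine Bornology.IsBounded.subset (Metric.isBounded_closedBall (x := (0 : V)) (r := 1)) ?_
    rintro - ⟨n, rfl⟩
    rw [Metric.mem_closedBall, dist_zero_right]
    show ‖(w n : X)‖ ≤ 1
    rw [hwnorm n]
  obtain ⟨K, hKc, hKsub⟩ :=
    IsCompactOperator.image_subset_compact_of_bounded
      (f := ((J.comp V.subtypeL).toLinearMap : V →ₗ[ℝ] W)) hcomp hbdd
  have hmem : ∀ n, J (w n : X) ∈ K := fun n => hKsub ⟨w n, Set.mem_range_self n, rfl⟩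
  obtain ⟨L, -, φ, hφ, hconv⟩ := hKc.tendsto_subseq hmem
  -- the subsequence is Cauchy in X
  set v : ℕ → X := fun n => (w (φ n) : X) with hv
  have hepsv : Filter.Tendsto (fun n => ‖eps (v n)‖) Filter.atTop (nhds 0) :=
    hepslim.comp hφ.tendsto_atTop
  have hJcauchy : CauchySeq (fun n => J (v n)) := hconv.cauchySeq
  have hcauchy : CauchySeq v := by
    rw [Metric.cauchySeq_iff]
    intro ε hε
    have hC1 : 0 < C' + 1 := by linarith
    obtain ⟨N₁, hN₁⟩ := (Metric.tendsto_atTop.mp hepsv) (ε / (8 * C')) (by positivity)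
    obtain ⟨N₂, hN₂⟩ := Metric.cauchySeq_iff.mp hJcauchy (ε / (4 * (C' + 1))) (by positivity)
    refine ⟨max N₁ N₂, fun m hm n hn => ?_⟩
    have hm1 := le_of_max_le_left hm
    have hm2 := le_of_max_le_right hm
    have hn1 := le_of_max_le_left hn
    have hn2 := le_of_max_le_right hn
    have em : ‖eps (v m)‖ < ε / (8 * C') := by
      have := hN₁ m hm1; rwa [Real.dist_eq, sub_zero, abs_of_nonneg (norm_nonneg _)] at this
    have en : ‖eps (v n)‖ < ε / (8 * C') := by
      have := hN₁ n hn1; rwa [Real.dist_eq, sub_zero, abs_of_nonneg (norm_nonneg _)] at this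
    have eJ : ‖J (v m) - J (v n)‖ < ε / (4 * (C' + 1)) := by
      have := hN₂ m hm2 n hn2; rwa [dist_eq_norm] at this
    rw [dist_eq_norm]
    have key : ‖v m - v n‖ ≤ C' * (‖eps (v m)‖ + ‖eps (v n)‖) + (C' + 1) * ‖J (v m) - J (v n)‖ := by
      calc ‖v m - v n‖ ≤ ‖grad (v m - v n)‖ + ‖J (v m - v n)‖ := hnorm _
        _ ≤ C' * (‖eps (v m - v n)‖ + ‖J (v m - v n)‖) + ‖J (v m - v n)‖ := by
            have := hKorn' (v m - v n); linarith
        _ = C' * ‖eps (v m - v n)‖ + (C' + 1) * ‖J (v m - v n)‖ := by ring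
        _ ≤ C' * (‖eps (v m)‖ + ‖eps (v n)‖) + (C' + 1) * ‖J (v m) - J (v n)‖ := by
            have h1 : ‖eps (v m - v n)‖ ≤ ‖eps (v m)‖ + ‖eps (v n)‖ := by
              rw [map_sub]; exact norm_sub_le _ _
            have h2 : ‖J (v m - v n)‖ = ‖J (v m) - J (v n)‖ := by rw [map_sub]
            rw [h2]; gcongr
    have hb1 : C' * (‖eps (v m)‖ + ‖eps (v n)‖) < C' * (2 * (ε / (8 * C'))) := by
      apply mul_lt_mul_of_pos_left _ hC'pos; linarith
    have hb2 : (C' + 1) * ‖J (v m) - J (v n)‖ < (C' + 1) * (ε / (4 * (C' + 1))) := by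
      exact mul_lt_mul_of_pos_left eJ hC1
    have e1 : C' * (2 * (ε / (8 * C'))) = ε / 4 := by field_simp; ring
    have e2 : (C' + 1) * (ε / (4 * (C' + 1))) = ε / 4 := by field_simp
    have final : ‖v m - v n‖ < C' * (2 * (ε / (8 * C'))) + (C' + 1) * (ε / (4 * (C' + 1))) :=
      key.trans_lt (add_lt_add hb1 hb2)
    rw [e1, e2] at final
    linarith only [final, hε]
  obtain ⟨x, hx⟩ := cauchySeq_tendsto_of_complete hcauchy
  have hxV : x ∈ V := hVclosed.mem_of_tendsto hx (Filter.Eventually.of_forall fun n => (w (φ n)).2)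
  have hxnorm : ‖x‖ = 1 := by
    have h1 : Filter.Tendsto (fun n => ‖v n‖) Filter.atTop (nhds ‖x‖) := hx.norm
    have h2 : (fun n => ‖v n‖) = fun _ => (1 : ℝ) := funext fun n => hwnorm (φ n)
    rw [h2] at h1
    exact tendsto_nhds_unique h1 tendsto_const_nhds
  have hxeps : eps x = 0 := by
    have h1 : Filter.Tendsto (fun n => eps (v n)) Filter.atTop (nhds (eps x)) :=
      (eps.continuous.tendsto x).comp hx
    have h2 : Filter.Tendsto (fun n => eps (v n)) Filter.atTop (nhds 0) := by
      rw [tendsto_zero_iff_norm_tendsto_zero]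
      exact hepsv
    exact tendsto_nhds_unique h1 h2
  have := hker x hxV hxeps
  rw [this, norm_zero] at hxnorm
  norm_num at hxnorm
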